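/- Let r ≥ 2 and 1 ≤ n_1 ≤ n_2 ≤ ⋯ ≤ n_r be integers with n_1 + ⋯ + n_r ≥ 3, and suppose there is an integer l with 1 ≤ l < r such that n_1 = ⋯ = n_l = 1 and n_{l+1} ≥ 2. Then the complete multipartite graph K_{n_1,n_2,…,n_r} satisfies b_dR(K_{n_1,n_2,…,n_r}) = ⌈l/2⌉. -/
import Mathlib


/-- A double Roman dominating function (DRDF) on a graph `G`: a function
`f : V → ℕ` taking values in `{0,1,2,3}` such that every vertex assigned `0`
has a neighbor assigned `3` or two distinct neighbors assigned `2`, and every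
vertex assigned `1` has a neighbor assigned at least `2`. -/
def IsDRDF {V : Type*} (G : SimpleGraph V) (f : V → ℕ) : Prop :=
  (∀ v, f v ≤ 3) ∧
  (∀ v, f v = 0 →
    (∃ w, G.Adj v w ∧ f w = 3) ∨
    (∃ w₁ w₂, G.Adj v w₁ ∧ G.Adj v w₂ ∧ w₁ ≠ w₂ ∧ f w₁ = 2 ∧ f w₂ = 2)) ∧
  (∀ v, f v = 1 → ∃ w, G.Adj v w ∧ 2 ≤ f w)

/-- The double Roman domination number `γ_dR(G)`: the minimum weight of a DRDF on `G`. -/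
noncomputable def gammaDR {V : Type*} [Fintype V] (G : SimpleGraph V) : ℕ :=
  sInf {k | ∃ f : V → ℕ, IsDRDF G f ∧ ∑ v, f v = k}

/-- The double Roman bondage number `b_dR(G)`: the minimum cardinality of a set
`B` of edges of `G` such that `γ_dR(G - B) > γ_dR(G)`. -/
noncomputable def bDR {V : Type*} [Fintype V] (G : SimpleGraph V) : ℕ :=
  sInf {k | ∃ B : Finset (Sym2 V), ↑B ⊆ G.edgeSet ∧ B.card = k ∧
    gammaDR G < gammaDR (G.deleteEdges ↑B)}


/-- endpoints of a `Sym2` element, as a finset -/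
def sym2ToFinset {V : Type*} [DecidableEq V] : Sym2 V → Finset V :=
  Sym2.lift ⟨fun a b => {a, b}, fun a b => Finset.pair_comm a b⟩

lemma mem_sym2ToFinset {V : Type*} [DecidableEq V] (a b v : V) :
    v ∈ sym2ToFinset s(a, b) ↔ v = a ∨ v = b := by
  simp [sym2ToFinset]

lemma card_sym2ToFinset {V : Type*} [DecidableEq V] (e : Sym2 V) :
    (sym2ToFinset e).card ≤ 2 := by
  induction e using Sym2.ind with
  | _ a b =>
    show ({a, b} : Finset V).card ≤ 2
    exact (Finset.card_insert_le _ _).trans (by simp)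

section Verts

variable (r : ℕ) (n : Fin r → ℕ) (hpos : ∀ i, 1 ≤ n i)

/-- The first vertex in part `i`. -/
def MPvert (i : ℕ) (h : i < r) : Σ i, Fin (n i) :=
  ⟨⟨i, h⟩, ⟨0, hpos ⟨i, h⟩⟩⟩

lemma MPvert_fst (i : ℕ) (h : i < r) : ((MPvert r n hpos i h).1 : ℕ) = i := rfl

lemma MPvert_inj {i i' : ℕ} {h : i < r} {h' : i' < r}
    (heq : MPvert r n hpos i h = MPvert r n hpos i' h') : i = i' :=
  congrArg (fun v => (v.1 : ℕ)) heq

lemma MPvert_congr {i i' : ℕ} (h : i < r) (hii : i = i') :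
    MPvert r n hpos i h = MPvert r n hpos i' (hii ▸ h) := by subst hii; rfl

end Verts

lemma drdf_const2 {V : Type*} (G : SimpleGraph V) : IsDRDF G (fun _ => 2) := by
  refine ⟨fun v => by norm_num, fun v h => by simp at h, fun v h => by simp at h⟩

lemma gammaDR_nonempty {V : Type*} [Fintype V] (G : SimpleGraph V) :
    {k | ∃ f : V → ℕ, IsDRDF G f ∧ ∑ v, f v = k}.Nonempty :=
  ⟨_, fun _ => 2, drdf_const2 G, rfl⟩

lemma pair_le_sum {V : Type*} [Fintype V] (f : V → ℕ) {a b : V} (hab : a ≠ b) :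
    f a + f b ≤ ∑ v, f v := by
  classical
  have h : ∑ v ∈ ({a, b} : Finset V), f v = f a + f b := Finset.sum_pair hab
  calc f a + f b = ∑ v ∈ ({a, b} : Finset V), f v := h.symm
    _ ≤ ∑ v, f v := Finset.sum_le_sum_of_subset (Finset.subset_univ _)

lemma single_le_sum' {V : Type*} [Fintype V] (f : V → ℕ) (a : V) : f a ≤ ∑ v, f v :=
  Finset.single_le_sum (fun _ _ => Nat.zero_le _) (Finset.mem_univ a)

lemma three_le_gammaDR {V : Type*} [Fintype V] (G : SimpleGraph V)
    (h3 : 3 ≤ Fintype.card V) : 3 ≤ gammaDR G := by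
  classical
  refine le_csInf (gammaDR_nonempty G) ?_
  rintro k ⟨f, ⟨hle, h0, h1⟩, rfl⟩
  by_contra hk
  push_neg at hk
  -- some vertex has value 0
  have h0v : ∃ v, f v = 0 := by
    by_contra h
    push_neg at h
    have : ∀ v, 1 ≤ f v := fun v => Nat.one_le_iff_ne_zero.2 (h v)
    have := Finset.sum_le_sum (fun v (_ : v ∈ Finset.univ) => this v)
    simp at this
    omega
  obtain ⟨v, hv⟩ := h0v
  rcases h0 v hv with ⟨w, _, hw⟩ | ⟨w₁, w₂, _, _, hne, hw1, hw2⟩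
  · have := single_le_sum' f w; omega
  · have := pair_le_sum f hne; omega

lemma gammaDR_eq_three {V : Type*} [Fintype V] (G : SimpleGraph V)
    (h3 : 3 ≤ Fintype.card V) (v : V) (hv : ∀ w, w ≠ v → G.Adj v w) :
    gammaDR G = 3 := by
  classical
  refine le_antisymm ?_ (three_le_gammaDR G h3)
  have hf : IsDRDF G (fun w => if w = v then 3 else 0) := by
    refine ⟨fun w => by dsimp only; split <;> omega, fun w hw => ?_, fun w hw => by
      by_cases h : w = v <;> simp [h] at hw⟩
    left
    refine ⟨v, ?_, by simp⟩
    · have : w ≠ v := by intro h; subst h; simp at hw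
      exact (hv w this).symm
  refine Nat.sInf_le ⟨_, hf, ?_⟩
  rw [Finset.sum_ite_eq' Finset.univ v (fun _ => 3)]
  simp

lemma three_lt_gammaDR {V : Type*} [Fintype V] (G : SimpleGraph V)
    (h3 : 3 ≤ Fintype.card V) (h : ∀ v, ∃ w, w ≠ v ∧ ¬ G.Adj v w) :
    3 < gammaDR G := by
  classical
  have h4 : 4 ≤ gammaDR G := by
    refine le_csInf (gammaDR_nonempty G) ?_
    rintro k ⟨f, ⟨hle, h0, h1⟩, rfl⟩
    have hge3 : 3 ≤ ∑ w, f w := by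
      have := three_le_gammaDR G h3
      exact this.trans (Nat.sInf_le ⟨f, ⟨hle, h0, h1⟩, rfl⟩)
    by_contra hk
    push_neg at hk
    have hsum3 : ∑ w, f w = 3 := by omega
    by_cases h3v : ∃ u, f u = 3
    · obtain ⟨u, hu⟩ := h3v
      have hrest : ∀ w, w ≠ u → f w = 0 := by
        intro w hw
        have := pair_le_sum f hw
        omega
      -- u is universal
      obtain ⟨w, hwne, hwnadj⟩ := h u
      have hw0 : f w = 0 := hrest w hwne
      rcases h0 w hw0 with ⟨x, hadj, hx⟩ | ⟨w₁, w₂, _, _, hne, hw1, hw2⟩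
      · have hxu : x = u := by
          by_contra hxu
          have := hrest x hxu; omega
        subst hxu
        exact hwnadj hadj.symm
      · have := pair_le_sum f hne; omega
    · push_neg at h3v
      by_cases h0v : ∃ u, f u = 0
      · obtain ⟨u, hu⟩ := h0v
        rcases h0 u hu with ⟨x, _, hx⟩ | ⟨w₁, w₂, _, _, hne, hw1, hw2⟩
        · exact h3v x hx
        · have := pair_le_sum f hne; omega
      · push_neg at h0v
        have hall1 : ∀ u, f u = 1 := by
          intro u
          by_contra hu
          have hu2 : 2 ≤ f u := by
            have := h0v u; omega
          -- sum over the rest is at least card - 1 ≥ 2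
          have hrest : ∀ w ∈ Finset.univ.erase u, 1 ≤ f w := by
            intro w _
            have := h0v w; omega
          have h1le : (Finset.univ.erase u).card ≤ ∑ w ∈ Finset.univ.erase u, f w := by
            calc (Finset.univ.erase u).card
                = ∑ w ∈ Finset.univ.erase u, 1 := by simp
              _ ≤ ∑ w ∈ Finset.univ.erase u, f w := Finset.sum_le_sum hrest
          have hcard : (Finset.univ.erase u).card = Fintype.card V - 1 := by
            rw [Finset.card_erase_of_mem (Finset.mem_univ u), Finset.card_univ]
          have hsplit : f u + ∑ w ∈ Finset.univ.erase u, f w = ∑ w, f w :=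
            Finset.add_sum_erase _ f (Finset.mem_univ u)
          omega
        have hne : Nonempty V := by
          rw [← Fintype.card_pos_iff]; omega
        obtain ⟨u⟩ := hne
        obtain ⟨x, _, hx⟩ := h1 u (hall1 u)
        have := hall1 x
        omega
  omega

/-- Let `1 ≤ n_1 ≤ ⋯ ≤ n_r` (`r ≥ 2`) with total order at least `3`, and suppose
`n_1 = ⋯ = n_l = 1` and `n_{l+1} ≥ 2` for some `1 ≤ l < r`. Then
`b_dR(K_{n_1,…,n_r}) = ⌈l/2⌉`. -/
theorem completeMultipartite_bDR_ones (r : ℕ) (hr : 2 ≤ r) (n : Fin r → ℕ)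
    (hmono : Monotone n) (hpos : ∀ i, 1 ≤ n i) (hsum : 3 ≤ ∑ i, n i)
    (l : ℕ) (hl : 1 ≤ l) (hlr : l < r)
    (hones : ∀ i : Fin r, (i : ℕ) < l → n i = 1)
    (hnext : 2 ≤ n ⟨l, hlr⟩) :
    bDR (SimpleGraph.completeMultipartiteGraph fun i => Fin (n i)) = (l + 1) / 2 := by
  classical
  set V := (Σ i, Fin (n i)) with hV
  set G := (SimpleGraph.completeMultipartiteGraph fun i => Fin (n i)) with hG
  have hadj : ∀ v w : V, G.Adj v w ↔ v.1 ≠ w.1 := by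
    intro v w; rfl
  have hcard : Fintype.card V = ∑ i, n i := by
    simp [hV, Fintype.card_sigma]
  have h3 : 3 ≤ Fintype.card V := by omega
  -- singleton parts determine vertices
  have hsing : ∀ v w : V, ((v.1 : ℕ) < l) → w.1 = v.1 → w = v := by
    rintro ⟨i, a⟩ ⟨j, b⟩ hil (h : j = i)
    subst h
    have h1 : n j = 1 := hones j hil
    have : a = b := by
      have ha := a.2; have hb := b.2
      apply Fin.ext
      omega
    rw [this]
  have huniv : ∀ (i : ℕ) (hi : i < l) (w : V),
      w ≠ MPvert r n hpos i (hi.trans hlr) → G.Adj (MPvert r n hpos i (hi.trans hlr)) w := by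
    intro i hi w hw
    rw [hadj]
    intro hfst
    exact hw (hsing _ w hi hfst.symm)
  have hγ : gammaDR G = 3 := by
    refine gammaDR_eq_three G h3 (MPvert r n hpos 0 (by omega)) ?_
    intro w hw
    exact huniv 0 hl w hw
  -- the partner function
  set m := (l + 1) / 2 with hm
  set p : ℕ → ℕ := fun k => if 2 * k + 1 < l then 2 * k + 1 else l with hp
  have hpspec : ∀ k, (2 * k + 1 < l ∧ p k = 2 * k + 1) ∨ (l ≤ 2 * k + 1 ∧ p k = l) := by
    intro k
    by_cases h : 2 * k + 1 < l
    · exact Or.inl ⟨h, by simp [hp, h]⟩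
    · exact Or.inr ⟨by omega, by simp [hp, h]⟩
  have hpr : ∀ k, p k < r := by
    intro k
    rcases hpspec k with ⟨h1, h2⟩ | ⟨h1, h2⟩ <;> omega
  have h2kr : ∀ k : Fin m, 2 * (k : ℕ) < l := by
    intro k; have := k.2; omega
  set j : Fin m → Sym2 V := fun k =>
    s(MPvert r n hpos (2 * k) ((h2kr k).trans hlr), MPvert r n hpos (p k) (hpr k)) with hj
  have hjinj : Function.Injective j := by
    intro k k' heq
    simp only [hj, Sym2.eq_iff] at heq
    have hk := h2kr k
    have hk' := h2kr k'
    have hs1 := hpspec (k : ℕ)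
    have hs2 := hpspec (k' : ℕ)
    apply Fin.ext
    rcases heq with ⟨h1, h2⟩ | ⟨h1, h2⟩
    · have := MPvert_inj r n hpos h1
      omega
    · have e1 := MPvert_inj r n hpos h1
      have e2 := MPvert_inj r n hpos h2
      omega
  set B : Finset (Sym2 V) := Finset.image j Finset.univ with hB
  have hBcard : B.card = m := by
    rw [hB, Finset.card_image_of_injective _ hjinj, Finset.card_univ, Fintype.card_fin]
  have hBsub : ↑B ⊆ G.edgeSet := by
    intro e he
    simp only [hB, Finset.coe_image, Set.mem_image] at he
    obtain ⟨k, -, rfl⟩ := he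
    rw [hj, SimpleGraph.mem_edgeSet, hadj]
    intro hfst
    have : 2 * (k : ℕ) = p (k : ℕ) := congrArg Fin.val hfst
    have := hpspec (k : ℕ)
    have := h2kr k
    omega
  -- after deleting B, no universal vertex
  have hnouniv : ∀ v : V, ∃ w, w ≠ v ∧ ¬ (G.deleteEdges ↑B).Adj v w := by
    intro v
    by_cases hvl : (v.1 : ℕ) < l
    · have hv : v = MPvert r n hpos (v.1 : ℕ) v.1.2 := (hsing v (MPvert r n hpos (v.1 : ℕ) v.1.2) hvl rfl).symm
      rcases Nat.even_or_odd (v.1 : ℕ) with ⟨c, hc⟩ | ⟨c, hc⟩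
      · have hcm : c < m := by omega
        have hcr : 2 * c < r := by omega
        have hveq : v = MPvert r n hpos (2 * c) hcr := by
          rw [hv]; exact MPvert_congr r n hpos v.1.2 (by omega)
        refine ⟨MPvert r n hpos (p c) (hpr c), fun h => ?_, ?_⟩
        · have h2 := MPvert_inj r n hpos (h.trans hveq)
          have := hpspec c
          omega
        · rw [SimpleGraph.deleteEdges_adj]
          rintro ⟨-, hmemB⟩
          apply hmemB
          rw [hB, Finset.coe_image]
          refine ⟨⟨c, hcm⟩, Finset.mem_coe.mpr (Finset.mem_univ _), ?_⟩
          simp only [hj]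
          exact congrArg (fun x => s(x, MPvert r n hpos (p c) (hpr c))) hveq.symm
      · have hcm : c < m := by omega
        have hpc : p c = (v.1 : ℕ) := by have := hpspec c; omega

        have hveq : v = MPvert r n hpos (p c) (hpr c) := by
          rw [hv]; exact MPvert_congr r n hpos v.1.2 hpc.symm
        have h2cr : 2 * c < r := by omega
        refine ⟨MPvert r n hpos (2 * c) h2cr, fun h => ?_, ?_⟩
        · have h2 := MPvert_inj r n hpos (h.trans hv)
          omega
        · rw [SimpleGraph.deleteEdges_adj]
          rintro ⟨-, hmemB⟩
          apply hmemB
          rw [hB, Finset.coe_image]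
          refine ⟨⟨c, hcm⟩, Finset.mem_coe.mpr (Finset.mem_univ _), ?_⟩
          simp only [hj]
          rw [Sym2.eq_swap]
          exact congrArg (fun x => s(x, MPvert r n hpos (2 * c) h2cr)) hveq.symm
    · -- v is in a big part: a non-neighbor in the same part
      obtain ⟨vf, vs⟩ := v
      simp only at hvl
      have hge : 2 ≤ n vf := by
        refine hnext.trans (hmono ?_)
        show l ≤ (vf : ℕ)
        omega
      have hy1 : (1 : ℕ) < n vf := by omega
      set y : Fin (n vf) := if (vs : ℕ) = 0 then ⟨1, hy1⟩ else ⟨0, by omega⟩ with hy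
      have hyne : y ≠ vs := by
        intro h
        have hval := congrArg Fin.val h
        by_cases h0 : (vs : ℕ) = 0
        · rw [hy] at hval; rw [if_pos h0] at hval
          simp only at hval
          omega
        · rw [hy] at hval; rw [if_neg h0] at hval
          simp only at hval
          omega
      refine ⟨⟨vf, y⟩, fun h => ?_, ?_⟩
      · rw [Sigma.mk.inj_iff] at h
        exact hyne (eq_of_heq h.2)
      · rw [SimpleGraph.deleteEdges_adj]
        rintro ⟨hadj2, -⟩
        rw [hadj] at hadj2
        exact hadj2 rfl
  -- membership of m in the bondage set
  have hmem : m ∈ {k | ∃ B : Finset (Sym2 V), ↑B ⊆ G.edgeSet ∧ B.card = k ∧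
      gammaDR G < gammaDR (G.deleteEdges ↑B)} := by
    exact ⟨B, hBsub, hBcard, by rw [hγ]; exact three_lt_gammaDR _ h3 hnouniv⟩
  -- lower bound
  have hlow : ∀ k ∈ {k | ∃ B : Finset (Sym2 V), ↑B ⊆ G.edgeSet ∧ B.card = k ∧
      gammaDR G < gammaDR (G.deleteEdges ↑B)}, m ≤ k := by
    rintro k ⟨C, hCsub, rfl, hCgt⟩
    rw [hγ] at hCgt
    have hnone : ∀ v : V, ∃ w, w ≠ v ∧ ¬ (G.deleteEdges ↑C).Adj v w := by
      by_contra hcon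
      push_neg at hcon
      obtain ⟨v, hv⟩ := hcon
      have h33 : gammaDR (G.deleteEdges ↑C) = 3 := gammaDR_eq_three _ h3 v hv
      omega
    -- each singleton vertex has an incident deleted edge
    set U : Finset V :=
      Finset.image (fun i : Fin l => MPvert r n hpos (i : ℕ) (i.2.trans hlr)) Finset.univ with hU
    have hUcard : U.card = l := by
      rw [hU, Finset.card_image_of_injective, Finset.card_univ, Fintype.card_fin]
      intro a b hab
      exact Fin.ext (MPvert_inj r n hpos hab)
    have hUsub : U ⊆ C.biUnion sym2ToFinset := by
      intro v hv
      rw [hU, Finset.mem_image] at hv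
      obtain ⟨i, -, rfl⟩ := hv
      obtain ⟨w, hwne, hwnadj⟩ := hnone (MPvert r n hpos (i : ℕ) (i.2.trans hlr))
      have hadjG : G.Adj (MPvert r n hpos (i : ℕ) (i.2.trans hlr)) w := huniv _ i.2 w hwne
      have hmemC : s(MPvert r n hpos (i : ℕ) (i.2.trans hlr), w) ∈ C := by
        by_contra hnm
        exact hwnadj (by rw [SimpleGraph.deleteEdges_adj]; exact ⟨hadjG, hnm⟩)
      rw [Finset.mem_biUnion]
      exact ⟨_, hmemC, (mem_sym2ToFinset _ _ _).mpr (Or.inl rfl)⟩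
    have hcount : l ≤ 2 * C.card := by
      calc l = U.card := hUcard.symm
        _ ≤ (C.biUnion sym2ToFinset).card := Finset.card_le_card hUsub
        _ ≤ ∑ e ∈ C, (sym2ToFinset e).card := Finset.card_biUnion_le
        _ ≤ ∑ _e ∈ C, 2 := Finset.sum_le_sum (fun e _ => card_sym2ToFinset e)
        _ = 2 * C.card := by rw [Finset.sum_const, smul_eq_mul, mul_comm]
    omega
  exact le_antisymm (Nat.sInf_le hmem) (le_csInf ⟨m, hmem⟩ hlow)
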